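/- arXiv:1403.6188 — 2 statements merged into one kernel-verified Lean document; each statement's English description precedes it below -/
import Mathlib

section
/- Let T be a spanning tree of a finite connected simple graph rooted at r, with its vertex set partitioned into fragments each inducing a connected subgraph of T. Let x ∈ F_i, y ∈ F_j with i ≠ j, and let z = LCA(x,y). If z ∉ F_i ∪ F_j, then z is a merging node: z has two distinct children a and b in T with F_i ⊆ a↓ and F_j ⊆ b↓. -/
open Finset
open scoped Classical

noncomputable section

variable {V : Type*} [Fintype V] [DecidableEq V]

/-- `Desc T r v u` : `u` is a descendant of `v` in the tree `T` rooted at `r`,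
i.e. `v` lies on the unique path in `T` from `r` to `u` (includes `u = v`). -/
def Desc (T : SimpleGraph V) (r v u : V) : Prop :=
  ∀ p : T.Walk r u, p.IsPath → v ∈ p.support

/-- `descSet T r v` is `v↓`, the set of descendants of `v` in `T` rooted at `r`. -/
def descSet (T : SimpleGraph V) (r v : V) : Set V := {u | Desc T r v u}

/-- `IsLCA T r z x y` : `z` is the least common ancestor of `x` and `y` in `T`
rooted at `r`: `z` is a common ancestor of maximal depth (distance from `r`). -/
def IsLCA (T : SimpleGraph V) (r z x y : V) : Prop :=
  Desc T r z x ∧ Desc T r z y ∧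
    ∀ u, Desc T r u x → Desc T r u y → T.dist r u ≤ T.dist r z

/-- `cutw G w S` : total weight of edges of `G` with exactly one endpoint in `S`
(each such edge `{x,y}` with `x ∈ S`, `y ∉ S` is counted once, as the ordered
pair `(x, y)`). -/
def cutw (G : SimpleGraph V) (w : V → V → ℝ) (S : Set V) : ℝ :=
  ∑ x, ∑ y, if x ∈ S ∧ y ∉ S ∧ G.Adj x y then w x y else 0

/-- `degw G w v` : the weighted degree `δ(v)` of `v` in `G`. -/
def degw (G : SimpleGraph V) (w : V → V → ℝ) (v : V) : ℝ :=
  ∑ u, if G.Adj u v then w u v else 0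

/-- `rhoLCA G T w r v` : `ρ(v)`, the total weight of edges of `G` whose
endpoints' least common ancestor in `T` (rooted at `r`) is `v`.  Each edge is
counted as two ordered pairs, whence the division by `2`. -/
def rhoLCA (G T : SimpleGraph V) (w : V → V → ℝ) (r v : V) : ℝ :=
  (∑ x, ∑ y, if G.Adj x y ∧ IsLCA T r v x y then w x y else 0) / 2

/-- `degDown G T w r v` : `δ↓(v) = Σ_{u ∈ v↓} δ(u)`. -/
def degDown (G T : SimpleGraph V) (w : V → V → ℝ) (r v : V) : ℝ :=
  ∑ u, if Desc T r v u then degw G w u else 0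

/-- `rhoDown G T w r v` : `ρ↓(v) = Σ_{u ∈ v↓} ρ(u)`. -/
def rhoDown (G T : SimpleGraph V) (w : V → V → ℝ) (r v : V) : ℝ :=
  ∑ u, if Desc T r v u then rhoLCA G T w r u else 0

section Aux
open SimpleGraph
variable {T : SimpleGraph V} {r : V}

lemma path_unique (hT : T.IsTree) {u v : V} (p q : T.Walk u v) (hp : p.IsPath) (hq : q.IsPath) :
    p = q := by
  obtain ⟨w, -, hu⟩ := hT.existsUnique_path u v
  rw [hu p hp, hu q hq]

lemma desc_iff (hT : T.IsTree) {u v : V} (p : T.Walk r u) (hp : p.IsPath) :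
    Desc T r v u ↔ v ∈ p.support := by
  refine ⟨fun h => h p hp, fun h q hq => ?_⟩
  rwa [path_unique hT q p hq hp]

lemma path_length_eq_dist (hT : T.IsTree) {u v : V} (p : T.Walk u v) (hp : p.IsPath) :
    p.length = T.dist u v := by
  obtain ⟨q, hq, hlen⟩ := hT.isConnected.exists_path_of_dist u v
  rw [path_unique hT p q hp hq, hlen]

lemma isPath_concat {u v w : V} {p : T.Walk u v} (hp : p.IsPath) (h : T.Adj v w)
    (hw : w ∉ p.support) : (p.concat h).IsPath := by
  rw [← Walk.isPath_reverse_iff, Walk.reverse_concat, Walk.cons_isPath_iff,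
    Walk.isPath_reverse_iff, Walk.support_reverse]
  exact ⟨hp, by simpa using hw⟩

lemma exists_child (hT : T.IsTree) {z u : V} (hzu : Desc T r z u) (hne : z ≠ u) :
    ∃ a, T.Adj z a ∧ Desc T r z a ∧ Desc T r a u ∧ T.dist r a = T.dist r z + 1 := by
  obtain ⟨p, hp, -⟩ := hT.isConnected.exists_path_of_dist r u
  have hzs : z ∈ p.support := hzu p hp
  obtain ⟨a, h, q', hq'⟩ := Walk.exists_eq_cons_of_ne hne (p.dropUntil z hzs)
  have haq : a ∈ (p.dropUntil z hzs).support.tail := by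
    rw [hq', Walk.support_cons]
    exact q'.start_mem_support
  have hap : a ∈ p.support :=
    p.support_dropUntil_subset hzs (List.mem_of_mem_tail haq)
  have hnd : ((p.takeUntil z hzs).support ++ (p.dropUntil z hzs).support.tail).Nodup := by
    rw [← Walk.support_append, p.take_spec hzs]
    exact hp.support_nodup
  have hat : a ∉ (p.takeUntil z hzs).support :=
    fun hmem => (List.disjoint_of_nodup_append hnd) hmem haq
  have hpa : ((p.takeUntil z hzs).concat h).IsPath :=
    isPath_concat (hp.takeUntil hzs) h hat
  refine ⟨a, h, ?_, (desc_iff hT p hp).2 hap, ?_⟩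
  · rw [desc_iff hT _ hpa, Walk.support_concat]
    exact List.mem_append_left _ (p.takeUntil z hzs).end_mem_support
  · rw [← path_length_eq_dist hT _ hpa, Walk.length_concat,
      ← path_length_eq_dist hT _ (hp.takeUntil hzs)]

lemma parent_unique (hT : T.IsTree) {a w w' : V} (hwa : T.Adj w a) (hdw : Desc T r w a)
    (hwa' : T.Adj w' a) (hdw' : Desc T r w' a) : w = w' := by
  obtain ⟨p, hp, -⟩ := hT.isConnected.exists_path_of_dist r a
  have hws : w ∈ p.support := hdw p hp
  have hws' : w' ∈ p.support := hdw' p hp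
  have h1 : p.dropUntil w hws = Walk.cons hwa .nil :=
    path_unique hT _ _ (hp.dropUntil hws) (by simp [hwa.ne])
  have h2 : p.dropUntil w' hws' = Walk.cons hwa' .nil :=
    path_unique hT _ _ (hp.dropUntil hws') (by simp [hwa'.ne])
  have e1 : p.support = (p.takeUntil w hws).support ++ [a] := by
    conv_lhs => rw [← p.take_spec hws]
    rw [Walk.support_append, h1]
    simp
  have e2 : p.support = (p.takeUntil w' hws').support ++ [a] := by
    conv_lhs => rw [← p.take_spec hws']
    rw [Walk.support_append, h2]
    simp
  have e3 : (p.takeUntil w hws).support = (p.takeUntil w' hws').support :=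
    List.append_cancel_right (e1.symm.trans e2)
  have g1 : (p.takeUntil w hws).support.getLast? = some w := by
    rw [List.getLast?_eq_getLast (by simp), Walk.getLast_support]
  have g2 : (p.takeUntil w' hws').support.getLast? = some w' := by
    rw [List.getLast?_eq_getLast (by simp), Walk.getLast_support]
  rw [e3, g2] at g1
  exact (Option.some_injective _ g1).symm

lemma desc_step (hT : T.IsTree) {z a u u' : V} (hza : T.Adj z a) (hdza : Desc T r z a)
    (hdau : Desc T r a u) (huu' : T.Adj u u') (hne : u' ≠ z) : Desc T r a u' := by
  obtain ⟨p, hp, -⟩ := hT.isConnected.exists_path_of_dist r u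
  have has : a ∈ p.support := hdau p hp
  by_cases hmem : u' ∈ p.support
  · have ht : (p.takeUntil u' hmem).IsPath := hp.takeUntil hmem
    rw [desc_iff hT _ ht]
    have h1 : p.dropUntil u' hmem = Walk.cons huu'.symm .nil :=
      path_unique hT _ _ (hp.dropUntil hmem) (by simp [huu'.ne'])
    have hsup : p.support = (p.takeUntil u' hmem).support ++ [u] := by
      conv_lhs => rw [← p.take_spec hmem]
      rw [Walk.support_append, h1]
      simp
    rw [hsup, List.mem_append, List.mem_singleton] at has
    rcases has with h | h
    · exact h
    · subst h
      have hdu' : Desc T r u' a := (desc_iff hT p hp).2 hmem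
      exact absurd (parent_unique hT huu'.symm hdu' hza hdza) hne
  · have hpa : (p.concat huu').IsPath := isPath_concat hp huu' hmem
    rw [desc_iff hT _ hpa, Walk.support_concat]
    exact List.mem_append_left _ has

lemma desc_walk (hT : T.IsTree) {z a : V} (hza : T.Adj z a) (hdza : Desc T r z a) :
    ∀ {u u' : V} (w : T.Walk u u'), z ∉ w.support → Desc T r a u → Desc T r a u'
  | _, _, .nil, _, hd => hd
  | _, _, .cons h q, hz, hd => by
    rw [Walk.support_cons, List.mem_cons] at hz
    push_neg at hz
    have hbz : _ ≠ z := fun e => hz.2 (e ▸ q.start_mem_support)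
    exact desc_walk hT hza hdza q hz.2 (desc_step hT hza hdza hd h hbz)

end Aux

/-- for a fragment decomposition of the spanning tree `T`
rooted at `r`, if `x ∈ F i`, `y ∈ F j` with `i ≠ j` and `z = LCA(x, y)` lies in
neither `F i` nor `F j`, then `z` is a merging node: it has two distinct
children `a, b` with `F i ⊆ a↓` and `F j ⊆ b↓`. -/
theorem stmt10 (G T : SimpleGraph V) (hG : G.Connected)
    (hT : T.IsTree) (hTG : T ≤ G)
    (r : V) (k : ℕ) (F : Fin k → Set V)
    (hne : ∀ i, (F i).Nonempty)
    (hdisj : ∀ i j, i ≠ j → Disjoint (F i) (F j))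
    (hcover : (⋃ i, F i) = Set.univ)
    (hconn : ∀ i, (T.induce (F i)).Connected)
    (x y z : V) (i j : Fin k) (hij : i ≠ j) (hx : x ∈ F i) (hy : y ∈ F j)
    (hz : IsLCA T r z x y) (hznot : z ∉ F i ∪ F j) :
    ∃ a b, a ≠ b ∧ T.Adj z a ∧ T.Adj z b ∧ Desc T r z a ∧ Desc T r z b ∧
      F i ⊆ descSet T r a ∧ F j ⊆ descSet T r b := by
  rw [Set.mem_union] at hznot
  push_neg at hznot
  have hzx : z ≠ x := fun e => hznot.1 (e ▸ hx)
  have hzy : z ≠ y := fun e => hznot.2 (e ▸ hy)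
  obtain ⟨a, hza, hdza, hdax, hda⟩ := exists_child hT hz.1 hzx
  obtain ⟨b, hzb, hdzb, hdby, hdb⟩ := exists_child hT hz.2.1 hzy
  have hab : a ≠ b := by
    intro e
    subst e
    have := hz.2.2 a hdax hdby
    omega
  refine ⟨a, b, hab, hza, hzb, hdza, hdzb, ?_, ?_⟩
  · intro u hu
    obtain ⟨w0⟩ := (hconn i).preconnected ⟨x, hx⟩ ⟨u, hu⟩
    have hzw : z ∉ (w0.map (SimpleGraph.Embedding.induce (F i)).toHom).support := by
      rw [SimpleGraph.Walk.support_map]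
      intro hmem
      obtain ⟨⟨v, hv⟩, -, rfl⟩ := List.mem_map.1 hmem
      exact hznot.1 hv
    exact desc_walk hT hza hdza _ hzw hdax
  · intro u hu
    obtain ⟨w0⟩ := (hconn j).preconnected ⟨y, hy⟩ ⟨u, hu⟩
    have hzw : z ∉ (w0.map (SimpleGraph.Embedding.induce (F j)).toHom).support := by
      rw [SimpleGraph.Walk.support_map]
      intro hmem
      obtain ⟨⟨v, hv⟩, -, rfl⟩ := List.mem_map.1 hmem
      exact hznot.2 hv
    exact desc_walk hT hzb hdzb _ hzw hdby

end
end

section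
/- Let G be a finite connected simple graph on vertex set V with nonnegative edge weights, let T be a spanning tree of G rooted at r, let X with ∅ ≠ X ⊊ V be such that exactly one edge of T has exactly one endpoint in X, and let v be the endpoint of that tree edge that is the child of the other endpoint. Then X = v↓ or X = V ∖ v↓, and in either case cut(X) = cut(v↓). -/
open Finset
open scoped Classical

noncomputable section

variable {V : Type*} [Fintype V] [DecidableEq V]

private lemma walk_const (T : SimpleGraph V) (X : Set V) (p v : V)
    (huniq : ∀ a b : V, T.Adj a b → a ∈ X → b ∉ X →
      (a = p ∧ b = v) ∨ (a = v ∧ b = p))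
    {a b : V} (q : T.Walk a b) (hq : s(p, v) ∉ q.edges) : a ∈ X ↔ b ∈ X := by
  induction q with
  | nil => exact Iff.rfl
  | @cons u x y h q' ih =>
    rw [SimpleGraph.Walk.edges_cons, List.mem_cons, not_or] at hq
    have hne : ¬((u = p ∧ x = v) ∨ (u = v ∧ x = p)) := by
      intro hc
      apply hq.1
      rcases hc with ⟨h1, h2⟩ | ⟨h1, h2⟩ <;> subst h1 <;> subst h2
      · rfl
      · exact Sym2.eq_swap
    have key : u ∈ X ↔ x ∈ X := by
      constructor
      · intro hu
        by_contra hx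
        exact hne (huniq u x h hu hx)
      · intro hx
        by_contra hu
        rcases huniq x u h.symm hx hu with ⟨h1, h2⟩ | ⟨h1, h2⟩
        · exact hne (Or.inr ⟨h2, h1⟩)
        · exact hne (Or.inl ⟨h2, h1⟩)
    exact key.trans (ih hq.2)

private lemma cutw_compl (G : SimpleGraph V) (w : V → V → ℝ)
    (hsym : ∀ x y, w x y = w y x) (S : Set V) :
    cutw G w Sᶜ = cutw G w S := by
  unfold cutw
  rw [Finset.sum_comm]
  refine Finset.sum_congr rfl fun x _ => Finset.sum_congr rfl fun y _ => ?_
  have hiff : (y ∈ Sᶜ ∧ x ∉ Sᶜ ∧ G.Adj y x) ↔ (x ∈ S ∧ y ∉ S ∧ G.Adj x y) := by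
    simp only [Set.mem_compl_iff, not_not, G.adj_comm y x]
    tauto
  simp only [hsym y x, hiff]

/-- if `X` (nonempty, proper) is such that exactly one edge
of the spanning tree `T` has exactly one endpoint in `X` (counted here as
exactly one ordered pair `(a, b)` with `T.Adj a b`, `a ∈ X`, `b ∉ X`), that
edge joins `p` and `v` with `v` the child of `p`, then `X = v↓` or
`X = V ∖ v↓`, and in either case `cut(X) = cut(v↓)`. -/
theorem stmt13 (G T : SimpleGraph V) (hG : G.Connected)
    (hT : T.IsTree) (hTG : T ≤ G)
    (w : V → V → ℝ) (hsym : ∀ x y, w x y = w y x) (hnn : ∀ x y, 0 ≤ w x y)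
    (r : V) (X : Set V) (hXne : X ≠ ∅) (hXuniv : X ≠ Set.univ)
    (hone : (Finset.univ.filter
      (fun q : V × V => T.Adj q.1 q.2 ∧ q.1 ∈ X ∧ q.2 ∉ X)).card = 1)
    (p v : V) (hadj : T.Adj p v) (hchild : Desc T r p v)
    (hcross : (p ∈ X ∧ v ∉ X) ∨ (v ∈ X ∧ p ∉ X)) :
    (X = descSet T r v ∨ X = (descSet T r v)ᶜ) ∧
      cutw G w X = cutw G w (descSet T r v) := by
  classical
  -- the unique crossing ordered pair
  obtain ⟨c, hc⟩ := Finset.card_eq_one.mp hone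
  have hmemc : ∀ a b : V, T.Adj a b → a ∈ X → b ∉ X → (a, b) = c := by
    intro a b h1 h2 h3
    have : (a, b) ∈ Finset.univ.filter
        (fun q : V × V => T.Adj q.1 q.2 ∧ q.1 ∈ X ∧ q.2 ∉ X) := by
      simp [h1, h2, h3]
    rw [hc, Finset.mem_singleton] at this
    exact this
  have hcpv : c = (p, v) ∨ c = (v, p) := by
    rcases hcross with ⟨h1, h2⟩ | ⟨h1, h2⟩
    · exact Or.inl (hmemc p v hadj h1 h2).symm
    · exact Or.inr (hmemc v p hadj.symm h1 h2).symm
  have huniq : ∀ a b : V, T.Adj a b → a ∈ X → b ∉ X →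
      (a = p ∧ b = v) ∨ (a = v ∧ b = p) := by
    intro a b h1 h2 h3
    have h := hmemc a b h1 h2 h3
    rcases hcpv with hcv | hcv <;> rw [hcv, Prod.ext_iff] at h
    · exact Or.inl h
    · exact Or.inr h
  have hpv : p ≠ v := hadj.ne
  have hreach : ∀ u : V, ∃ q : T.Walk r u, q.IsPath := by
    intro u
    obtain ⟨q⟩ := hT.isConnected r u
    exact ⟨q.toPath.1, q.toPath.2⟩
  have hvr : v ≠ r := by
    intro h
    subst h
    have := hchild SimpleGraph.Walk.nil (SimpleGraph.Walk.IsPath.nil)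
    simp at this
    exact hpv (this ▸ rfl)
  -- u in v↓ implies u ∈ X ↔ v ∈ X
  have hin : ∀ u, Desc T r v u → (u ∈ X ↔ v ∈ X) := by
    intro u hu
    obtain ⟨q, hq⟩ := hreach u
    have hvq : v ∈ q.support := hu q hq
    have hpq : p ∈ (q.takeUntil v hvq).support := hchild _ (hq.takeUntil hvq)
    have hnd : q.support.Nodup := hq.support_nodup
    have hsplit : q.support =
        (q.takeUntil v hvq).support ++ (q.dropUntil v hvq).support.tail := by
      conv_lhs => rw [← q.take_spec hvq]
      rw [SimpleGraph.Walk.support_append]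
    have hpd : p ∉ (q.dropUntil v hvq).support := by
      intro hp
      have hp' : p ∈ (q.dropUntil v hvq).support.tail := by
        have hcons : (q.dropUntil v hvq).support =
            v :: (q.dropUntil v hvq).support.tail :=
          SimpleGraph.Walk.support_eq_cons _
        rw [hcons, List.mem_cons] at hp
        rcases hp with hp | hp
        · exact absurd hp hpv
        · exact hp
      rw [hsplit] at hnd
      exact (List.nodup_append'.mp hnd).2.2 hpq hp'
    have hedge : s(p, v) ∉ (q.dropUntil v hvq).edges := by
      intro he
      exact hpd (SimpleGraph.Walk.fst_mem_support_of_mem_edges _ he)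
    exact (walk_const T X p v huniq (q.dropUntil v hvq) hedge).symm
  -- u not in v↓ implies u ∈ X ↔ r ∈ X
  have hout : ∀ u, ¬ Desc T r v u → (u ∈ X ↔ r ∈ X) := by
    intro u hu
    unfold Desc at hu
    push_neg at hu
    obtain ⟨q, hq, hv⟩ := hu
    have hedge : s(p, v) ∉ q.edges := by
      intro he
      exact hv (SimpleGraph.Walk.snd_mem_support_of_mem_edges _ he)
    exact (walk_const T X p v huniq q hedge).symm
  -- p is not a descendant of v
  have hpnd : ¬ Desc T r v p := by
    obtain ⟨q, hq⟩ := hreach v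
    have hpq : p ∈ q.support := hchild q hq
    intro hd
    have hvt : v ∈ (q.takeUntil p hpq).support := hd _ (hq.takeUntil hpq)
    have hnd : q.support.Nodup := hq.support_nodup
    have hsplit : q.support =
        (q.takeUntil p hpq).support ++ (q.dropUntil p hpq).support.tail := by
      conv_lhs => rw [← q.take_spec hpq]
      rw [SimpleGraph.Walk.support_append]
    have hvd : v ∈ (q.dropUntil p hpq).support.tail := by
      have hmem : v ∈ (q.dropUntil p hpq).support :=
        SimpleGraph.Walk.end_mem_support _
      have hcons : (q.dropUntil p hpq).support =
          p :: (q.dropUntil p hpq).support.tail :=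
        SimpleGraph.Walk.support_eq_cons _
      rw [hcons, List.mem_cons] at hmem
      rcases hmem with hmem | hmem
      · exact absurd hmem.symm hpv
      · exact hmem
    rw [hsplit] at hnd
    exact (List.nodup_append'.mp hnd).2.2 hvt hvd
  by_cases hvX : v ∈ X
  · have hpX : p ∉ X := by
      rcases hcross with ⟨h1, h2⟩ | ⟨h1, h2⟩
      · exact absurd hvX h2
      · exact h2
    have hrX : r ∉ X := fun h => hpX ((hout p hpnd).mpr h)
    have hX : X = descSet T r v := by
      ext u
      constructor
      · intro h
        by_contra hnd'
        exact hrX ((hout u hnd').mp h)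
      · intro h
        exact (hin u h).mpr hvX
    exact ⟨Or.inl hX, by rw [hX]⟩
  · have hpX : p ∈ X := by
      rcases hcross with ⟨h1, h2⟩ | ⟨h1, h2⟩
      · exact h1
      · exact absurd h1 hvX
    have hrX : r ∈ X := (hout p hpnd).mp hpX
    have hX : X = (descSet T r v)ᶜ := by
      ext u
      simp only [Set.mem_compl_iff]
      constructor
      · intro h hd
        exact hvX ((hin u hd).mp h)
      · intro h
        exact (hout u h).mpr hrX
    refine ⟨Or.inr hX, ?_⟩
    rw [hX, cutw_compl G w hsym]


end
end
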